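/- For all positive integers n, i(n+1) ≥ i(n), i.e., the sequence i is monotone nondecreasing. -/
import Mathlib


theorem stmt_8
    (i a : ℕ → ℚ)
    (ha0 : a 0 = 0) (hi1 : i 1 = 1) (ha1 : a 1 = 0)
    (ha : ∀ n : ℕ, 2 ≤ n → a n = (i (n - 1) + a (n - 1)) / 2)
    (hi23 : ∀ n : ℕ, 2 ≤ n → n ≤ 3 → i n = i (n - 1))
    (hi4 : i 4 = (i 1 + a 1 + i 2 + a 2) / 2)
    (hi5 : ∀ n : ℕ, 5 ≤ n → i n = (i 2 + a 2 + i (n - 3) + a (n - 3)) / 2) :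
    ∀ n : ℕ, 1 ≤ n → i (n + 1) ≥ i n := by
  have ha2 : a 2 = 1/2 := by rw [ha 2 (by norm_num)]; norm_num [hi1, ha1]
  have hi2 : i 2 = 1 := by rw [hi23 2 (by norm_num) (by norm_num)]; norm_num [hi1]
  have hi3 : i 3 = 1 := by rw [hi23 3 (by norm_num) (by norm_num)]; norm_num [hi2]
  have ha3 : a 3 = 3/4 := by rw [ha 3 (by norm_num)]; norm_num [hi2, ha2]
  have hi4' : i 4 = 5/4 := by rw [hi4]; rw [hi1, ha1, hi2, ha2]; norm_num
  have ha4 : a 4 = 7/8 := by rw [ha 4 (by norm_num)]; norm_num [hi3, ha3]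
  have hi5' : i 5 = 3/2 := by rw [hi5 5 (by norm_num)]; norm_num [hi2, ha2]
  have key : ∀ n, 1 ≤ n → a n ≤ i n ∧ i n ≤ i (n+1) := by
    intro n
    induction n using Nat.strong_induction_on with
    | _ n ih =>
      intro hn
      match n, hn with
      | 1, _ => exact ⟨by rw [ha1, hi1]; norm_num, by rw [hi1, hi2]⟩
      | 2, _ => exact ⟨by rw [ha2, hi2]; norm_num, by rw [hi2, hi3]⟩
      | 3, _ => exact ⟨by rw [ha3, hi3]; norm_num, by rw [hi3, hi4']; norm_num⟩
      | 4, _ => exact ⟨by rw [ha4, hi4']; norm_num, by rw [hi4', hi5']; norm_num⟩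
      | (m+5), _ =>
        have h1 := ih (m+4) (by omega) (by omega)
        have h2 := ih (m+2) (by omega) (by omega)
        have han : a (m+5) = (i (m+4) + a (m+4))/2 := by
          have h := ha (m+5) (by omega)
          rw [show m+5-1 = m+4 from by omega] at h
          exact h
        refine ⟨?_, ?_⟩
        · rw [han]; linarith [h1.1, h1.2]
        · have e1 : i (m+5) = (i 2 + a 2 + i (m+2) + a (m+2))/2 := by
            have h := hi5 (m+5) (by omega)
            rw [show m+5-3 = m+2 from by omega] at h
            exact h
          have e2 : i (m+5+1) = (i 2 + a 2 + i (m+3) + a (m+3))/2 := by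
            have h := hi5 (m+6) (by omega)
            rw [show m+6-3 = m+3 from by omega] at h
            exact h
          have e3 : a (m+3) = (i (m+2) + a (m+2))/2 := by
            have h := ha (m+3) (by omega)
            rw [show m+3-1 = m+2 from by omega] at h
            exact h
          rw [e1, e2, e3]
          linarith [h2.1, h2.2]
  intro n hn
  exact (key n hn).2
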